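/- arXiv:1609.05221 — 7 statements merged into one kernel-verified Lean document; each statement's English description precedes it below -/
import Mathlib

section
/- Let A be a finite relational structure. If every F-tolerant power A^I_F (for every set I and filter F on I) admits a homomorphism to A, then A is compact: every structure B of the same type, all of whose finite substructures admit homomorphisms to A, itself admits a homomorphism to A. -/
/-- A relational type (signature): a set of relation symbols with arities. -/
structure Sig : Type 1 where
  symb : Type
  ar : symb → ℕ

/-- A σ-structure on carrier `A`. -/
structure Str (σ : Sig) (A : Type) : Type where
  rel : ∀ r : σ.symb, (Fin (σ.ar r) → A) → Prop

/-- A homomorphism of σ-structures. -/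
def IsHom {σ : Sig} {B A : Type} (SB : Str σ B) (SA : Str σ A) (h : B → A) : Prop :=
  ∀ (r : σ.symb) (t : Fin (σ.ar r) → B), SB.rel r t → SA.rel r (fun j => h (t j))

/-- The F-tolerant power `A^I_F`. -/
def tolPow {σ : Sig} {A : Type} (SA : Str σ A) (I : Type) (F : Filter I) : Str σ (I → A) :=
  ⟨fun r t => {i | SA.rel r (fun j => t j i)} ∈ F⟩

/-- `A` is compact: every structure all of whose finite (induced) substructures admit
homomorphisms to `A` itself admits a homomorphism to `A`. -/
def StrCompact {σ : Sig} {A : Type} (SA : Str σ A) : Prop :=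
  ∀ (B : Type) (SB : Str σ B),
    (∀ S : Finset B, ∃ h : B → A, ∀ (r : σ.symb) (t : Fin (σ.ar r) → B),
      SB.rel r t → (∀ j, t j ∈ S) → SA.rel r (fun j => h (t j))) →
    ∃ h : B → A, IsHom SB SA h

/-- If every tolerant power of the finite structure `A` (over a proper filter)
admits a homomorphism to `A`, then `A` is compact. -/
theorem stmt1 (σ : Sig) (A : Type) [Finite A] (SA : Str σ A)
    (h : ∀ (I : Type) (F : Filter I), F.NeBot →
      ∃ φ : (I → A) → A, IsHom (tolPow SA I F) SA φ) :
    StrCompact SA := by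
  intro B SB hfin
  cases isEmpty_or_nonempty B with
  | inl hB =>
    obtain ⟨h0, hh0⟩ := hfin ∅
    exact ⟨h0, fun r t ht => hh0 r t ht (fun j => isEmptyElim (t j))⟩
  | inr hB =>
    obtain ⟨h0, _⟩ := hfin ∅
    haveI : Nonempty A := ⟨h0 (Classical.arbitrary B)⟩
    set gens : Set (Set (B → A)) :=
      {s | ∃ (r : σ.symb) (tup : Fin (σ.ar r) → B), SB.rel r tup ∧
        s = {i | SA.rel r (fun j => i (tup j))}} with hgens
    have hne : (Filter.generate gens).NeBot := by
      rw [Filter.generate_neBot_iff]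
      intro t hsub htfin
      have key : ∀ s ∈ t, ∃ (r : σ.symb) (tup : Fin (σ.ar r) → B), SB.rel r tup ∧
          s = {i | SA.rel r (fun j => i (tup j))} := fun s hs => hsub hs
      choose rr tt hrel hseq using key
      have hSfin : (⋃ (s : Set (B → A)) (hs : s ∈ t), Set.range (tt s hs)).Finite :=
        htfin.biUnion' (fun s hs => Set.finite_range _)
      obtain ⟨hmap, hh⟩ := hfin hSfin.toFinset
      refine ⟨hmap, fun s hs => ?_⟩
      rw [hseq s hs]
      exact hh (rr s hs) (tt s hs) (hrel s hs) (fun j => by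
        rw [Set.Finite.mem_toFinset]
        exact Set.mem_iUnion.2 ⟨s, Set.mem_iUnion.2 ⟨hs, ⟨j, rfl⟩⟩⟩)
    obtain ⟨φ, hφ⟩ := h (B → A) (Filter.generate gens) hne
    refine ⟨fun b => φ (fun i => i b), fun r t ht => ?_⟩
    exact hφ r (fun j i => i (t j))
      (Filter.mem_generate_of_mem ⟨r, t, ht, rfl⟩)
end

section
/- Let A be a finite relational structure of width one, i.e., there is a homomorphism from the power-set structure P(A) to A. Then for every set I and every filter F on I, the F-tolerant power A^I_F admits a homomorphism to A. In particular every finite structure of width one is compact. -/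
/-- The power-set structure `P(A)`: universe the nonempty subsets of `A`, with
`(S₁,…,S_k) ∈ R(P(A))` iff each `S_j` equals the `j`-th projection of
`R(A) ∩ (S₁ × … × S_k)`. -/
def PStr (σ : Sig) {A : Type} (SA : Str σ A) : Str σ {S : Set A // S.Nonempty} :=
  ⟨fun r Sv => ∀ j : Fin (σ.ar r),
    {a | ∃ t : Fin (σ.ar r) → A, SA.rel r t ∧ (∀ j', t j' ∈ (Sv j').1) ∧ t j = a}
      = (Sv j).1⟩

/-- A finite structure of width one (i.e. `P(A) → A`) has all its tolerant powers
mapping to it, and is compact. -/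
theorem stmt5 (σ : Sig) (A : Type) [Finite A] (SA : Str σ A)
    (hw1 : ∃ ψ : {S : Set A // S.Nonempty} → A, IsHom (PStr σ SA) SA ψ) :
    (∀ (I : Type) (F : Filter I), F.NeBot →
      ∃ φ : (I → A) → A, IsHom (tolPow SA I F) SA φ) ∧ StrCompact SA := by

  classical
  obtain ⟨ψ, hψ⟩ := hw1
  have main : ∀ (I : Type) (F : Filter I), F.NeBot →
      ∃ φ : (I → A) → A, IsHom (tolPow SA I F) SA φ := by
    intro I F hF
    set Sf : (I → A) → Set A := fun f => ⋂ S ∈ {S : Set A | f ⁻¹' S ∈ F}, S with hSf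
    have hmem : ∀ f : I → A, f ⁻¹' (Sf f) ∈ F := by
      intro f
      have hfin : {S : Set A | f ⁻¹' S ∈ F}.Finite := Set.toFinite _
      rw [hSf]
      simp only [Set.preimage_iInter]
      exact (Filter.biInter_mem hfin).2 (fun S hS => hS)
    have hmin : ∀ (f : I → A) (T : Set A), f ⁻¹' T ∈ F → Sf f ⊆ T := by
      intro f T hT
      exact Set.biInter_subset_of_mem hT
    have hne : ∀ f : I → A, (Sf f).Nonempty := by
      intro f
      rcases Filter.nonempty_of_mem (hmem f) with ⟨i, hi⟩
      exact ⟨f i, hi⟩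
    refine ⟨fun f => ψ ⟨Sf f, hne f⟩, ?_⟩
    intro r t ht
    have key : (PStr σ SA).rel r (fun j => ⟨Sf (t j), hne (t j)⟩) := by
      intro j
      apply Set.Subset.antisymm
      · rintro a ⟨u, _, hu2, rfl⟩
        exact hu2 j
      · have hT : (t j) ⁻¹'
            {a | ∃ u : Fin (σ.ar r) → A, SA.rel r u ∧ (∀ j', u j' ∈ Sf (t j')) ∧ u j = a}
            ∈ F := by
          have h1 : ({i | SA.rel r (fun j => t j i)} ∩ ⋂ j', (t j') ⁻¹' Sf (t j')) ∈ F :=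
            Filter.inter_mem ht (Filter.iInter_mem.2 fun j' => hmem (t j'))
          refine Filter.mem_of_superset h1 ?_
          rintro i ⟨h2, h3⟩
          simp only [Set.mem_iInter, Set.mem_preimage] at h3
          exact ⟨fun j' => t j' i, h2, fun j' => h3 j', rfl⟩
        exact hmin (t j) _ hT
    exact hψ r _ key
  refine ⟨main, ?_⟩
  intro B SB hfin
  let F : Filter (Finset B) := ⨅ S : Finset B, Filter.principal {T | S ⊆ T}
  have hFm : ∀ S : Finset B, {T | S ⊆ T} ∈ F :=
    fun S => Filter.mem_iInf_of_mem S (Filter.mem_principal_self _)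
  have hdir : Directed (· ≥ ·) (fun S : Finset B => Filter.principal {T | S ⊆ T}) := by
    intro S₁ S₂
    refine ⟨S₁ ∪ S₂, Filter.principal_mono.2 ?_, Filter.principal_mono.2 ?_⟩
    · intro T hT
      exact Finset.union_subset_left hT
    · intro T hT
      exact Finset.union_subset_right hT
  have hF : F.NeBot := by
    refine Filter.iInf_neBot_of_directed hdir ?_
    intro S
    exact Filter.principal_neBot_iff.2 ⟨S, Finset.Subset.refl S⟩
  obtain ⟨φ, hφ⟩ := main (Finset B) F hF
  choose h hh using hfin
  refine ⟨fun b => φ (fun S => h S b), ?_⟩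
  intro r t hrel
  have hg : (tolPow SA (Finset B) F).rel r (fun j S => h S (t j)) := by
    refine Filter.mem_of_superset (hFm (Finset.image t Finset.univ)) ?_
    intro T hT
    exact hh T r t hrel (fun j => hT (Finset.mem_image_of_mem t (Finset.mem_univ j)))
  exact hφ r (fun j S => h S (t j)) hg
end

section
/- Let n ≥ 3, let F be a filter on a set I, and suppose the F-tolerant power (K_n)^I_F of the complete graph K_n admits a graph homomorphism φ to K_n with φ fixing the constant functions (φ(const_k) = k for all k < n). Then the family U = {X ⊆ I : φ(1_X) = 1} is an ultrafilter on I containing F, where 1_X is the characteristic function of X (with values in {0,1}). -/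
open Classical in
/-- The characteristic function of `X ⊆ I` with values `0, 1` in `Fin n`. -/
noncomputable def charFn {I : Type} (n : ℕ) [NeZero n] (X : Set I) : I → Fin n :=
  fun i => if i ∈ X then 1 else 0

/-- Greenwell–Lovász / Läuchli key lemma: if `φ` is a homomorphism
`(K_n)^I_F → K_n` (`n ≥ 3`) fixing the constant functions, then
`U = {X : φ(1_X) = 1}` is an ultrafilter containing `F`. -/
theorem stmt7 (n : ℕ) [NeZero n] (hn : 3 ≤ n) (I : Type) (F : Filter I) [F.NeBot]
    (φ : (I → Fin n) → Fin n)
    (hφ : ∀ f g : I → Fin n, {i | f i ≠ g i} ∈ F → φ f ≠ φ g)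
    (hconst : ∀ k : Fin n, φ (fun _ => k) = k) :
    ∃ U : Ultrafilter I, (↑U : Filter I) ≤ F ∧
      ∀ X : Set I, X ∈ U ↔ φ (charFn n X) = 1 := by
  classical
  obtain ⟨m, rfl⟩ : ∃ m, n = m + 3 := ⟨n - 3, by omega⟩
  have e01 : (0 : Fin (m+3)) ≠ 1 := by intro h; rw [Fin.ext_iff] at h; simp at h
  have e02 : (0 : Fin (m+3)) ≠ 2 := by intro h; rw [Fin.ext_iff] at h; simp at h; rw [Nat.mod_eq_of_lt (show 2 < m+3 by omega)] at h; omega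
  have e12 : (1 : Fin (m+3)) ≠ 2 := by intro h; rw [Fin.ext_iff] at h; simp at h; rw [Nat.mod_eq_of_lt (show 2 < m+3 by omega)] at h; omega
  -- everywhere-different functions get different colors
  have adj : ∀ f g : I → Fin (m+3), (∀ i, f i ≠ g i) → φ f ≠ φ g := by
    intro f g h
    apply hφ
    have : {i | f i ≠ g i} = Set.univ := Set.eq_univ_of_forall h
    rw [this]; exact Filter.univ_mem
  -- if f avoids the value k everywhere, then φ f ≠ k
  have avoid : ∀ (f : I → Fin (m+3)) (k : Fin (m+3)), (∀ i, f i ≠ k) → φ f ≠ k := by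
    intro f k h
    have := adj f (fun _ => k) h
    rwa [hconst k] at this
  -- range lemma: functions valued in {0,1,2} get a color in {0,1,2}
  have range3 : ∀ f : I → Fin (m+3), (∀ i, f i = 0 ∨ f i = 1 ∨ f i = 2) →
      (φ f = 0 ∨ φ f = 1 ∨ φ f = 2) := by
    intro f hf
    by_contra h
    push_neg at h
    refine avoid f (φ f) (fun i => ?_) rfl
    rcases hf i with h' | h' | h' <;> rw [h']
    · exact fun hh => h.1 hh.symm
    · exact fun hh => h.2.1 hh.symm
    · exact fun hh => h.2.2 hh.symm
  -- triple lemma: three pairwise everywhere-different {0,1,2}-valued functions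
  -- realize all three colors, in particular one of them gets color 1
  have triple : ∀ p q r : I → Fin (m+3),
      (∀ i, p i = 0 ∨ p i = 1 ∨ p i = 2) →
      (∀ i, q i = 0 ∨ q i = 1 ∨ q i = 2) →
      (∀ i, r i = 0 ∨ r i = 1 ∨ r i = 2) →
      (∀ i, p i ≠ q i) → (∀ i, p i ≠ r i) → (∀ i, q i ≠ r i) →
      φ p = 1 ∨ φ q = 1 ∨ φ r = 1 := by
    intro p q r hp hq hr hpq hpr hqr
    have dpq := adj p q hpq
    have dpr := adj p r hpr
    have dqr := adj q r hqr
    rcases range3 p hp with h1 | h1 | h1 <;> rcases range3 q hq with h2 | h2 | h2 <;>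
      rcases range3 r hr with h3 | h3 | h3 <;>
      first
        | (exact Or.inl h1)
        | (exact Or.inr (Or.inl h2))
        | (exact Or.inr (Or.inr h3))
        | (exact absurd (h1.trans h2.symm) dpq)
        | (exact absurd (h1.trans h3.symm) dpr)
        | (exact absurd (h2.trans h3.symm) dqr)
  -- characteristic functions are {0,1}-valued
  have hval : ∀ (X : Set I) (i : I),
      charFn (m+3) X i = 0 ∨ charFn (m+3) X i = 1 := by
    intro X i; unfold charFn; split <;> simp
  have two : ∀ X : Set I, φ (charFn (m+3) X) = 0 ∨ φ (charFn (m+3) X) = 1 := by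
    intro X
    have h2 : φ (charFn (m+3) X) ≠ 2 := by
      refine avoid _ 2 (fun i => ?_)
      rcases hval X i with h | h <;> rw [h]
      · exact e02
      · exact e12
    rcases range3 (charFn (m+3) X)
        (fun i => by rcases hval X i with h | h <;> simp [h]) with h | h | h
    · exact Or.inl h
    · exact Or.inr h
    · exact absurd h h2
  have huniv : φ (charFn (m+3) (Set.univ : Set I)) = 1 := by
    have : charFn (m+3) (Set.univ : Set I) = fun _ => 1 := by
      funext i; simp [charFn]
    rw [this, hconst]
  -- complement dichotomy
  have hcompl : ∀ X : Set I, φ (charFn (m+3) Xᶜ) = 1 ↔ φ (charFn (m+3) X) ≠ 1 := by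
    intro X
    have hadj : φ (charFn (m+3) X) ≠ φ (charFn (m+3) Xᶜ) := by
      refine adj _ _ (fun i => ?_)
      by_cases h : i ∈ X <;>
        simp [charFn, h, e01, e01.symm]
    constructor
    · intro h1 h2; rw [h1, h2] at hadj; exact hadj rfl
    · intro h1
      rcases two Xᶜ with h | h
      · rcases two X with h' | h'
        · rw [h', h] at hadj; exact absurd rfl hadj
        · exact absurd h' h1
      · exact h
  -- F-sets belong to U
  have hF : ∀ X ∈ F, φ (charFn (m+3) X) = 1 := by
    intro X hX
    have h0 : φ (charFn (m+3) X) ≠ 0 := by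
      have hsub : X ⊆ {i | charFn (m+3) X i ≠ 0} := by
        intro i hi
        simp only [Set.mem_setOf_eq, charFn, if_pos hi]
        exact fun h => e01 h.symm
      have := hφ (charFn (m+3) X) (fun _ => 0) (Filter.mem_of_superset hX hsub)
      rwa [hconst] at this
    rcases two X with h | h
    · exact absurd h h0
    · exact h
  -- monotonicity
  have mono : ∀ X Y : Set I, X ⊆ Y → φ (charFn (m+3) X) = 1 →
      φ (charFn (m+3) Y) = 1 := by
    intro X Y hXY hX
    by_contra hY
    have hYc : φ (charFn (m+3) Yᶜ) = 1 := (hcompl Y).2 hY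
    set p : I → Fin (m+3) := fun i => if i ∈ X then 0 else 1 with hp
    set q : I → Fin (m+3) := fun i => if i ∈ X then 1 else if i ∈ Y then 2 else 0 with hq
    set r : I → Fin (m+3) := fun i => if i ∈ X then 2 else if i ∈ Y then 0 else 2 with hr
    have hpv : ∀ i, p i = 0 ∨ p i = 1 ∨ p i = 2 := by
      intro i; rw [hp]; by_cases h1 : i ∈ X <;> simp [h1]
    have hqv : ∀ i, q i = 0 ∨ q i = 1 ∨ q i = 2 := by
      intro i; rw [hq]; by_cases h1 : i ∈ X <;> by_cases h2 : i ∈ Y <;> simp [h1, h2]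
    have hrv : ∀ i, r i = 0 ∨ r i = 1 ∨ r i = 2 := by
      intro i; rw [hr]; by_cases h1 : i ∈ X <;> by_cases h2 : i ∈ Y <;> simp [h1, h2]
    have hpq : ∀ i, p i ≠ q i := by
      intro i; rw [hp, hq]
      by_cases h1 : i ∈ X <;> by_cases h2 : i ∈ Y <;>
        simp [h1, h2, e01, e02, e12, e01.symm, e02.symm, e12.symm]
    have hpr : ∀ i, p i ≠ r i := by
      intro i; rw [hp, hr]
      by_cases h1 : i ∈ X <;> by_cases h2 : i ∈ Y <;>
        simp [h1, h2, e01, e02, e12, e01.symm, e02.symm, e12.symm]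
    have hqr : ∀ i, q i ≠ r i := by
      intro i; rw [hq, hr]
      by_cases h1 : i ∈ X <;> by_cases h2 : i ∈ Y <;>
        simp [h1, h2, e01, e02, e12, e01.symm, e02.symm, e12.symm]
    have hpφ : φ p ≠ 1 := by
      rw [← hX]
      refine adj _ _ (fun i => ?_)
      rw [hp]
      by_cases h1 : i ∈ X <;>
        simp [charFn, h1, e01, e01.symm]
    have hqφ : φ q ≠ 1 := by
      rw [← hYc]
      refine adj _ _ (fun i => ?_)
      rw [hq]
      by_cases h1 : i ∈ X <;> by_cases h2 : i ∈ Y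
      · simp [charFn, h1, h2, e01.symm]
      · exact absurd (hXY h1) h2
      · simp [charFn, h1, h2, e02.symm]
      · simp [charFn, h1, h2, e01]
    have hrφ : φ r ≠ 1 := by
      refine avoid _ 1 (fun i => ?_)
      rw [hr]
      by_cases h1 : i ∈ X <;> by_cases h2 : i ∈ Y <;>
        simp [h1, h2, e01, e12.symm, e01.symm]
    rcases triple p q r hpv hqv hrv hpq hpr hqr with h | h | h
    · exact hpφ h
    · exact hqφ h
    · exact hrφ h
  -- closure under intersection
  have hinter : ∀ X Y : Set I, φ (charFn (m+3) X) = 1 → φ (charFn (m+3) Y) = 1 →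
      φ (charFn (m+3) (X ∩ Y)) = 1 := by
    intro X Y hX hY
    by_contra hXY
    have hw : φ (charFn (m+3) (X ∩ Y)ᶜ) = 1 := (hcompl (X ∩ Y)).2 hXY
    set p : I → Fin (m+3) := fun i => if i ∈ X then 0 else 1 with hp
    set q : I → Fin (m+3) := fun i =>
      if i ∈ X then (if i ∈ Y then 2 else 1) else (if i ∈ Y then 0 else 2) with hq
    set r : I → Fin (m+3) := fun i =>
      if i ∈ X then (if i ∈ Y then 1 else 2) else (if i ∈ Y then 2 else 0) with hr
    have hpv : ∀ i, p i = 0 ∨ p i = 1 ∨ p i = 2 := by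
      intro i; rw [hp]; by_cases h1 : i ∈ X <;> simp [h1]
    have hqv : ∀ i, q i = 0 ∨ q i = 1 ∨ q i = 2 := by
      intro i; rw [hq]; by_cases h1 : i ∈ X <;> by_cases h2 : i ∈ Y <;> simp [h1, h2]
    have hrv : ∀ i, r i = 0 ∨ r i = 1 ∨ r i = 2 := by
      intro i; rw [hr]; by_cases h1 : i ∈ X <;> by_cases h2 : i ∈ Y <;> simp [h1, h2]
    have hpq : ∀ i, p i ≠ q i := by
      intro i; rw [hp, hq]
      by_cases h1 : i ∈ X <;> by_cases h2 : i ∈ Y <;>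
        simp [h1, h2, e01, e02, e12, e01.symm, e02.symm, e12.symm]
    have hpr : ∀ i, p i ≠ r i := by
      intro i; rw [hp, hr]
      by_cases h1 : i ∈ X <;> by_cases h2 : i ∈ Y <;>
        simp [h1, h2, e01, e02, e12, e01.symm, e02.symm, e12.symm]
    have hqr : ∀ i, q i ≠ r i := by
      intro i; rw [hq, hr]
      by_cases h1 : i ∈ X <;> by_cases h2 : i ∈ Y <;>
        simp [h1, h2, e01, e02, e12, e01.symm, e02.symm, e12.symm]
    have hpφ : φ p ≠ 1 := by
      rw [← hX]
      refine adj _ _ (fun i => ?_)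
      rw [hp]
      by_cases h1 : i ∈ X <;>
        simp [charFn, h1, e01, e01.symm]
    have hqφ : φ q ≠ 1 := by
      rw [← hY]
      refine adj _ _ (fun i => ?_)
      rw [hq]
      by_cases h1 : i ∈ X <;> by_cases h2 : i ∈ Y <;>
        simp [charFn, h1, h2, e01, e02, e12, e01.symm, e02.symm, e12.symm]
    have hrφ : φ r ≠ 1 := by
      rw [← hw]
      refine adj _ _ (fun i => ?_)
      rw [hr]
      by_cases h1 : i ∈ X <;> by_cases h2 : i ∈ Y <;>
        simp [charFn, h1, h2, e01, e02, e12, e01.symm, e02.symm, e12.symm]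
    rcases triple p q r hpv hqv hrv hpq hpr hqr with h | h | h
    · exact hpφ h
    · exact hqφ h
    · exact hrφ h
  -- assemble the ultrafilter
  let Uf : Filter I :=
    { sets := {X | φ (charFn (m+3) X) = 1}
      univ_sets := huniv
      sets_of_superset := fun {X Y} hX hXY => mono X Y hXY hX
      inter_sets := fun {X Y} hX hY => hinter X Y hX hY }
  have hmemUf : ∀ X : Set I, X ∈ Uf ↔ φ (charFn (m+3) X) = 1 := fun X => Iff.rfl
  have hc : ∀ s : Set I, sᶜ ∉ Uf ↔ s ∈ Uf := by
    intro s
    rw [hmemUf, hmemUf]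
    constructor
    · intro h
      by_contra h2
      exact h ((hcompl s).2 h2)
    · intro h h2
      exact (hcompl s).1 h2 h
  refine ⟨Ultrafilter.ofComplNotMemIff Uf hc, ?_, fun X => Iff.rfl⟩
  rw [Filter.le_def]
  intro s hs
  exact hF s hs
end

section
/- Let A be a structure with universe {0,…,n−1}, n ≥ 3, such that K_n is primitively positively definable from A: there is a finite σ-structure B with distinguished elements x, y such that R_{(B,x,y)} = {(φ(x),φ(y)) : φ a homomorphism B → A} equals the relation ≠ on {0,…,n−1}. If for a filter F on I there is a homomorphism φ : A^I_F → A, then the same map φ is a graph homomorphism (K_n)^I_F → K_n. -/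
/-- If `K_n` (`n ≥ 3`) is primitively positively definable from `A` (via a finite
structure `B` with distinguished elements `x, y`), then any homomorphism
`A^I_F → A` is also a graph homomorphism `(K_n)^I_F → K_n`. -/
theorem stmt10 (n : ℕ) (hn : 3 ≤ n) (σ : Sig) (SA : Str σ (Fin n))
    (β : Type) [Finite β] (SB : Str σ β) (x y : β)
    (hdef : ∀ a b : Fin n, a ≠ b ↔ ∃ ψ : β → Fin n, IsHom SB SA ψ ∧ ψ x = a ∧ ψ y = b)
    (I : Type) (F : Filter I) [F.NeBot]
    (φ : (I → Fin n) → Fin n) (hφ : IsHom (tolPow SA I F) SA φ) :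
    ∀ f g : I → Fin n, {i | f i ≠ g i} ∈ F → φ f ≠ φ g := by
  classical
  intro f g hfg
  set Ψ : β → I → Fin n := fun b i =>
    if h : f i ≠ g i then Classical.choose ((hdef (f i) (g i)).mp h) b else f i with hΨ
  have hΨhom : ∀ (r : σ.symb) (t : Fin (σ.ar r) → β), SB.rel r t →
      (tolPow SA I F).rel r (fun j => Ψ (t j)) := by
    intro r t ht
    refine Filter.mem_of_superset hfg ?_
    intro i hi
    simp only [Set.mem_setOf_eq] at hi ⊢
    have e : (fun j => Ψ (t j) i)
        = fun j => Classical.choose ((hdef (f i) (g i)).mp hi) (t j) :=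
      funext fun j => dif_pos hi
    rw [e]
    exact (Classical.choose_spec ((hdef (f i) (g i)).mp hi)).1 r t ht
  have hx : Ψ x = f := funext fun i => by
    by_cases h : f i ≠ g i
    · show dite _ _ _ = f i
      rw [dif_pos h]
      exact (Classical.choose_spec ((hdef (f i) (g i)).mp h)).2.1
    · show dite _ _ _ = f i
      rw [dif_neg h]
  have hy : Ψ y = g := funext fun i => by
    by_cases h : f i ≠ g i
    · show dite _ _ _ = g i
      rw [dif_pos h]
      exact (Classical.choose_spec ((hdef (f i) (g i)).mp h)).2.2
    · show dite _ _ _ = g i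
      rw [dif_neg h]
      exact not_ne_iff.mp h
  refine (hdef (φ f) (φ g)).mpr ⟨fun b => φ (Ψ b), ?_, ?_, ?_⟩
  · intro r t ht
    exact hφ r (fun j => Ψ (t j)) (hΨhom r t ht)
  · show φ (Ψ x) = φ f; rw [hx]
  · show φ (Ψ y) = φ g; rw [hy]
end

section
/- Let C_n (n ≥ 2) be the directed n-cycle and F a filter on I. In the quotient (C_n)^I_F/∼ (where f ∼ g iff {i : f(i)=g(i)} ∈ F, and f → g iff {i : g(i) = f(i)+1 mod n} ∈ F), each connected component is isomorphic to C_n; equivalently, for every f, the classes of f, f+1, …, f+(n−1) (pointwise addition mod n) are distinct and form a directed n-cycle, and every g in the component of f is ∼-equivalent to some f+k. -/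
/-- In `(C_n)^I_F` modulo `∼` (for a proper filter `F`), the component of any `f`
is a directed `n`-cycle: the classes `f, f+1, …, f+(n−1)` are pairwise distinct,
consecutive ones are joined by edges, and every `g` in the connected component of
`f` is `∼`-equivalent to some `f + k`. -/
theorem stmt12 (n : ℕ) (hn : 2 ≤ n) (I : Type) (F : Filter I) [F.NeBot]
    (f : I → ZMod n) :
    (∀ k l : ZMod n, {i | f i + k = f i + l} ∈ F → k = l) ∧
    (∀ k : ZMod n, {i | f i + (k + 1) = (f i + k) + 1} ∈ F) ∧
    (∀ g : I → ZMod n,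
      Relation.EqvGen (fun u v : I → ZMod n => {i | v i = u i + 1} ∈ F) f g →
      ∃ k : ZMod n, {i | g i = f i + k} ∈ F) := by
  refine ⟨?_, ?_, ?_⟩
  · intro k l h
    by_contra hkl
    have : {i | f i + k = f i + l} = (∅ : Set I) := by
      ext i; simp only [Set.mem_setOf_eq, Set.mem_empty_iff_false, iff_false]
      intro he; exact hkl (add_left_cancel he)
    rw [this] at h
    exact Filter.NeBot.ne ‹F.NeBot› (Filter.empty_mem_iff_bot.mp h)
  · intro k
    have : {i | f i + (k + 1) = (f i + k) + 1} = Set.univ := by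
      ext i; simp [add_assoc]
    rw [this]; exact Filter.univ_mem
  · intro g hg
    -- strengthen: for all u v related by EqvGen, exists k with v = u + k on F
    suffices h : ∀ u v : I → ZMod n,
        Relation.EqvGen (fun u v : I → ZMod n => {i | v i = u i + 1} ∈ F) u v →
        ∃ k : ZMod n, {i | v i = u i + k} ∈ F by
      exact h f g hg
    intro u v huv
    induction huv with
    | rel u v h =>
        exact ⟨1, h⟩
    | refl u =>
        exact ⟨0, by simpa using Filter.univ_mem⟩
    | symm u v _ ih =>
        obtain ⟨k, hk⟩ := ih
        refine ⟨-k, ?_⟩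
        filter_upwards [hk] with i hi
        simp [hi]
    | trans u v w _ _ ih1 ih2 =>
        obtain ⟨k, hk⟩ := ih1
        obtain ⟨l, hl⟩ := ih2
        refine ⟨k + l, ?_⟩
        filter_upwards [hk, hl] with i hi hj
        rw [hj, hi, add_assoc]
end

section
/- Each connected component of the quotient (C_n)^I_F/∼ admits exactly n homomorphisms to C_n. -/
/-- The setoid `f ∼ g ↔ {i | f i = g i} ∈ F` on `A^I`. -/
def tolSetoid (A I : Type) (F : Filter I) : Setoid (I → A) where
  r f g := {i | f i = g i} ∈ F
  iseqv := by
    refine ⟨fun f => ?_, fun {f g} h => ?_, fun {f g h} hfg hgh => ?_⟩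
    · simpa using F.univ_mem
    · simpa [eq_comm] using h
    · filter_upwards [hfg, hgh] with i h1 h2 using h1.trans h2

/-- The edge relation of the quotient `(C_n)^I_F/∼`. -/
def Rq (n : ℕ) (I : Type) (F : Filter I) :
    Quotient (tolSetoid (ZMod n) I F) → Quotient (tolSetoid (ZMod n) I F) → Prop :=
  fun a b => ∃ u v : I → ZMod n,
    Quotient.mk (tolSetoid (ZMod n) I F) u = a ∧
    Quotient.mk (tolSetoid (ZMod n) I F) v = b ∧ {i | v i = u i + 1} ∈ F

section Aux
variable (n : ℕ) (I : Type) (F : Filter I)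

abbrev Qt := Quotient (tolSetoid (ZMod n) I F)

def qsub : Qt n I F → Qt n I F → Qt n I F :=
  Quotient.map₂ (fun f g => f - g) (by
    intro f f' hf g g' hg
    filter_upwards [hf, hg] with i h1 h2
    simp [h1, h2])

def mkc (c : ZMod n) : Qt n I F := Quotient.mk _ (fun _ => c)

variable [F.NeBot]

lemma mkc_inj {c c' : ZMod n} (h : mkc n I F c = mkc n I F c') : c = c' := by
  have hm : {i : I | c = c'} ∈ F := Quotient.exact h
  by_contra hne
  have he : (∅ : Set I) ∈ F := by
    convert hm using 1
    ext i; simp [hne]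
  exact Filter.NeBot.ne ‹F.NeBot› (Filter.empty_mem_iff_bot.mp he)

lemma qsub_mk (f g : I → ZMod n) :
    qsub n I F (Quotient.mk _ f) (Quotient.mk _ g) = Quotient.mk _ (f - g) := rfl

lemma qsub_self (a : Qt n I F) : qsub n I F a a = mkc n I F 0 := by
  induction a using Quotient.inductionOn with
  | _ f =>
    refine Quotient.sound ?_
    filter_upwards [F.univ_mem] with i _
    simp

lemma qsub_neg {a b : Qt n I F} {c : ZMod n} (h : qsub n I F b a = mkc n I F c) :
    qsub n I F a b = mkc n I F (-c) := by
  induction a using Quotient.inductionOn with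
  | _ f =>
  induction b using Quotient.inductionOn with
  | _ g =>
  have h' := Quotient.exact h
  refine Quotient.sound ?_
  filter_upwards [h'] with i hi
  simp only [Pi.sub_apply] at hi ⊢
  rw [← hi]; ring

lemma qsub_add {a b c : Qt n I F} {x y : ZMod n}
    (h1 : qsub n I F c b = mkc n I F x) (h2 : qsub n I F b a = mkc n I F y) :
    qsub n I F c a = mkc n I F (x + y) := by
  induction a using Quotient.inductionOn with
  | _ f =>
  induction b using Quotient.inductionOn with
  | _ g =>
  induction c using Quotient.inductionOn with
  | _ h =>
  have h1' := Quotient.exact h1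
  have h2' := Quotient.exact h2
  refine Quotient.sound ?_
  filter_upwards [h1', h2'] with i hi1 hi2
  simp only [Pi.sub_apply] at hi1 hi2 ⊢
  rw [← hi1, ← hi2]; ring

lemma rq_qsub {a b : Qt n I F} (h : Rq n I F a b) : qsub n I F b a = mkc n I F 1 := by
  obtain ⟨u, v, hu, hv, huv⟩ := h
  subst hu; subst hv
  refine Quotient.sound ?_
  filter_upwards [huv] with i hi
  simp only [Pi.sub_apply]
  rw [hi]; ring

lemma eqv_qsub {a b : Qt n I F} (h : Relation.EqvGen (Rq n I F) a b) :
    ∃ c : ZMod n, qsub n I F b a = mkc n I F c := by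
  induction h with
  | rel a b hab => exact ⟨1, rq_qsub n I F hab⟩
  | refl a => exact ⟨0, qsub_self n I F a⟩
  | symm a b _ ih => obtain ⟨c, hc⟩ := ih; exact ⟨-c, qsub_neg n I F hc⟩
  | trans a b c _ _ ih1 ih2 =>
      obtain ⟨x, hx⟩ := ih1; obtain ⟨y, hy⟩ := ih2
      exact ⟨y + x, qsub_add n I F hy hx⟩

end Aux

/-- Each connected component of `(C_n)^I_F/∼` admits exactly `n` homomorphisms
to `C_n`. -/
theorem stmt14 (n : ℕ) (hn : 2 ≤ n) (I : Type) (F : Filter I) [F.NeBot]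
    (a₀ : Quotient (tolSetoid (ZMod n) I F)) :
    Nat.card {φ : {a : Quotient (tolSetoid (ZMod n) I F) //
        Relation.EqvGen (Rq n I F) a₀ a} → ZMod n //
      ∀ x y, Rq n I F x.1 y.1 → φ y = φ x + 1} = n := by
  classical
  set C := {a : Quotient (tolSetoid (ZMod n) I F) // Relation.EqvGen (Rq n I F) a₀ a}
  -- Δ : the "displacement" from a₀
  have hΔex : ∀ x : C, ∃ c : ZMod n, qsub n I F x.1 a₀ = mkc n I F c :=
    fun x => eqv_qsub n I F x.2
  set Δ : C → ZMod n := fun x => (hΔex x).choose with hΔdef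
  have hΔ : ∀ x : C, qsub n I F x.1 a₀ = mkc n I F (Δ x) := fun x => (hΔex x).choose_spec
  set base : C := ⟨a₀, Relation.EqvGen.refl a₀⟩ with hbase
  have hΔbase : Δ base = 0 :=
    mkc_inj n I F ((hΔ base).symm.trans (qsub_self n I F a₀))
  have hΔhom : ∀ x y : C, Rq n I F x.1 y.1 → Δ y = Δ x + 1 := by
    intro x y hxy
    have h2 : qsub n I F y.1 a₀ = mkc n I F (1 + Δ x) :=
      qsub_add n I F (rq_qsub n I F hxy) (hΔ x)
    have h3 := mkc_inj n I F ((hΔ y).symm.trans h2)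
    rw [h3]; ring
  -- every hom equals base value plus Δ
  have key : ∀ φ : {φ : C → ZMod n // ∀ x y, Rq n I F x.1 y.1 → φ y = φ x + 1},
      ∀ x : C, φ.1 x = φ.1 base + Δ x := by
    rintro ⟨φ, hφ⟩ x
    have claim : ∀ a b, Relation.EqvGen (Rq n I F) a b →
        ∀ (ha : Relation.EqvGen (Rq n I F) a₀ a) (hb : Relation.EqvGen (Rq n I F) a₀ b),
        qsub n I F b a = mkc n I F (φ ⟨b, hb⟩ - φ ⟨a, ha⟩) := by
      intro a b h
      induction h with
      | rel a b hab =>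
          intro ha hb
          have := hφ ⟨a, ha⟩ ⟨b, hb⟩ hab
          rw [this]
          simpa using rq_qsub n I F hab
      | refl a =>
          intro ha hb
          have : (⟨a, ha⟩ : C) = ⟨a, hb⟩ := rfl
          rw [this]
          simpa using qsub_self n I F a
      | symm a b hab ih =>
          intro hb ha
          have := ih ha hb
          have h2 := qsub_neg n I F this
          simpa using h2
      | trans a b c hab hbc ih1 ih2 =>
          intro ha hc
          have hb : Relation.EqvGen (Rq n I F) a₀ b := Relation.EqvGen.trans a₀ a b ha hab
          have := qsub_add n I F (ih2 hb hc) (ih1 ha hb)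
          convert this using 2
          ring
    have h1 := claim a₀ x.1 x.2 (Relation.EqvGen.refl a₀) x.2
    have h2 : (⟨x.1, x.2⟩ : C) = x := rfl
    rw [h2] at h1
    have heq := mkc_inj n I F ((hΔ x).symm.trans h1)
    have hb' : (⟨a₀, Relation.EqvGen.refl a₀⟩ : C) = base := rfl
    rw [hb'] at heq
    rw [heq]; ring
  have e : {φ : C → ZMod n // ∀ x y, Rq n I F x.1 y.1 → φ y = φ x + 1} ≃ ZMod n :=
    { toFun := fun φ => φ.1 base
      invFun := fun c => ⟨fun x => c + Δ x, by
        intro x y h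
        show c + Δ y = c + Δ x + 1
        rw [hΔhom x y h]; ring⟩
      left_inv := fun φ => Subtype.ext (funext fun x => (key φ x).symm)
      right_inv := fun c => by simp [hΔbase] }
  rw [Nat.card_congr e, Nat.card_zmod]
end

section
/- If the directed cycle C_{kp} is compact (k, p ≥ 2), then C_p is compact. More precisely: if for a filter F on I there is a homomorphism φ : (C_{kp})^I_F → C_{kp}, then the map ψ sending f : I → Z_p to the unique j ∈ Z_p with φ(kf) ∈ {kj, kj+1, …, kj+k−1} (where (kf)(i) = k·f(i)) is a homomorphism (C_p)^I_F → C_p. -/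
/-- Compactness of the directed `n`-cycle `C_n` (relation `{(i, i+1)}` on `ZMod n`):
every binary-relational structure all of whose finite (induced) substructures admit
homomorphisms to `C_n` itself admits a homomorphism to `C_n`. -/
def CycCompact (n : ℕ) : Prop :=
  ∀ (B : Type) (r : B → B → Prop),
    (∀ S : Finset B, ∃ h : B → ZMod n, ∀ x ∈ S, ∀ y ∈ S, r x y → h y = h x + 1) →
    ∃ h : B → ZMod n, ∀ x y : B, r x y → h y = h x + 1

lemma psi_hom (k p : ℕ) (hk : 2 ≤ k) (hp : 2 ≤ p) (I : Type) (F : Filter I)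
    (φ : (I → ZMod (k * p)) → ZMod (k * p))
    (hφ : ∀ f g : I → ZMod (k * p), {i | g i = f i + 1} ∈ F → φ g = φ f + 1)
    (f g : I → ZMod p) (hfg : {i | g i = f i + 1} ∈ F) :
    ((((φ (fun i => ((k * (g i).val : ℕ) : ZMod (k * p)))).val / k : ℕ) : ZMod p)) =
      ((((φ (fun i => ((k * (f i).val : ℕ) : ZMod (k * p)))).val / k : ℕ) : ZMod p)) + 1 := by
  have hkp0 : k * p ≠ 0 := by positivity
  haveI : NeZero (k * p) := ⟨hkp0⟩
  haveI : NeZero p := ⟨by omega⟩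
  haveI : Fact (1 < p) := ⟨by omega⟩
  set h : ℕ → I → ZMod (k * p) := fun j i => ((k * (f i).val + j : ℕ) : ZMod (k * p)) with hh
  -- step along the chain
  have step : ∀ j : ℕ, φ (h (j + 1)) = φ (h j) + 1 := by
    intro j
    apply hφ
    apply Filter.univ_mem'
    intro i
    simp only [h, Set.mem_setOf_eq]
    push_cast
    ring
  have chain : ∀ j : ℕ, φ (h j) = φ (h 0) + j := by
    intro j
    induction j with
    | zero => simp
    | succ n ih => rw [step n, ih]; push_cast; ring
  -- h 0 is kf
  have h0 : h 0 = fun i => ((k * (f i).val : ℕ) : ZMod (k * p)) := by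
    funext i; simp [h]
  -- last step: from h (k-1) to kg
  have last : φ (fun i => ((k * (g i).val : ℕ) : ZMod (k * p))) = φ (h (k - 1)) + 1 := by
    apply hφ
    refine Filter.mem_of_superset hfg ?_
    intro i hi
    simp only [Set.mem_setOf_eq] at hi ⊢
    rw [hi]
    have hv : (f i + 1).val = ((f i).val + 1) % p := by
      rw [ZMod.val_add, ZMod.val_one]
    rw [hv]
    simp only [hh]
    have hmod : ((k * (((f i).val + 1) % p) : ℕ) : ZMod (k * p)) =
        ((k * ((f i).val + 1) : ℕ) : ZMod (k * p)) := by
      rw [ZMod.natCast_eq_natCast_iff]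
      exact Nat.ModEq.mul_left' k (Nat.mod_modEq _ _)
    rw [hmod]
    have : k * ((f i).val + 1) = k * (f i).val + (k - 1) + 1 := by
      have := hk; ring_nf; omega
    rw [this]
    push_cast
    ring
  have key : φ (fun i => ((k * (g i).val : ℕ) : ZMod (k * p))) =
      φ (fun i => ((k * (f i).val : ℕ) : ZMod (k * p))) + (k : ZMod (k * p)) := by
    rw [last, chain (k - 1), ← h0]
    have hk1 : ((k - 1 : ℕ) : ZMod (k * p)) + 1 = (k : ZMod (k * p)) := by
      have : k - 1 + 1 = k := by omega
      rw [← this]; push_cast; ring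
    rw [add_assoc, hk1]
  -- now the arithmetic on values
  set a := φ (fun i => ((k * (f i).val : ℕ) : ZMod (k * p))) with ha
  rw [key]
  have hklt : k < k * p := by nlinarith
  have hbval : (a + (k : ZMod (k * p))).val = (a.val + k) % (k * p) := by
    rw [ZMod.val_add, ZMod.val_natCast, Nat.mod_eq_of_lt hklt]
  have haval : a.val < k * p := ZMod.val_lt a
  rw [hbval]
  by_cases hc : a.val + k < k * p
  · rw [Nat.mod_eq_of_lt hc, Nat.add_div_right _ (by omega : 0 < k)]
    push_cast
    ring
  · push_neg at hc
    have hb : (a.val + k) % (k * p) = a.val + k - k * p := by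
      have h2 : a.val + k < 2 * (k * p) := by omega
      rw [Nat.mod_eq_sub_mod hc, Nat.mod_eq_of_lt (by omega)]
    rw [hb]
    have hbd : (a.val + k - k * p) / k = 0 := Nat.div_eq_of_lt (by omega)
    have had : a.val / k = p - 1 := by
      have h1 : p - 1 ≤ a.val / k := by
        rw [Nat.le_div_iff_mul_le (by omega : 0 < k)]
        have : k * p - k ≤ a.val := by omega
        calc (p - 1) * k = k * p - k := by
              rw [Nat.sub_mul, one_mul, Nat.mul_comm]
          _ ≤ a.val := this
      have h2 : a.val / k < p := by
        rw [Nat.div_lt_iff_lt_mul (by omega : 0 < k), Nat.mul_comm p k]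
        omega
      omega
    rw [hbd, had]
    have : ((p - 1 : ℕ) : ZMod p) + 1 = ((p : ℕ) : ZMod p) := by
      have hpe : p - 1 + 1 = p := by omega
      rw [← hpe]; push_cast; ring
    rw [this, ZMod.natCast_self, Nat.cast_zero]

lemma cyc_transfer (k p : ℕ) (hk : 2 ≤ k) (hp : 2 ≤ p) (hC : CycCompact (k * p)) :
    CycCompact p := by
  classical
  intro B r hfin
  choose hS hprop using hfin
  set F : Filter (Finset B) := Filter.atTop with hF
  haveI : F.NeBot := Filter.atTop_neBot
  set r' : (Finset B → ZMod (k * p)) → (Finset B → ZMod (k * p)) → Prop :=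
    fun u v => {S | v S = u S + 1} ∈ F with hr'
  obtain ⟨φ, hφ⟩ : ∃ φ : (Finset B → ZMod (k * p)) → ZMod (k * p),
      ∀ u v, r' u v → φ v = φ u + 1 := by
    apply hC (Finset B → ZMod (k * p)) r'
    intro S'
    have hU : (⋂ u ∈ S', ⋂ v ∈ S', {i | r' u v → v i = u i + 1}) ∈ F := by
      refine (Filter.biInter_finset_mem S').mpr fun u _ => ?_
      refine (Filter.biInter_finset_mem S').mpr fun v _ => ?_
      by_cases h : r' u v
      · refine Filter.mem_of_superset h ?_
        intro i hi _
        exact hi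
      · refine Filter.univ_mem' fun i => ?_
        intro hr
        exact absurd hr h
    obtain ⟨i, hi⟩ := Filter.nonempty_of_mem hU
    refine ⟨fun u => u i, fun u hu v hv hr => ?_⟩
    simp only [Set.mem_iInter] at hi
    exact hi u hu v hv hr
  refine ⟨fun b =>
    (((φ (fun S => ((k * ((hS S b)).val : ℕ) : ZMod (k * p)))).val / k : ℕ) : ZMod p), ?_⟩
  intro x y hxy
  apply psi_hom k p hk hp (Finset B) F φ hφ (fun S => hS S x) (fun S => hS S y)
  refine Filter.mem_of_superset (Filter.mem_atTop ({x, y} : Finset B)) ?_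
  intro S hSle
  exact hprop S x (hSle (by simp)) y (hSle (by simp)) hxy

/-- If `C_{kp}` is compact then `C_p` is compact; more precisely, from a
homomorphism `φ : (C_{kp})^I_F → C_{kp}`, the map sending `f : I → ZMod p` to
`⌊φ(kf).val / k⌋ ∈ ZMod p` is a homomorphism `(C_p)^I_F → C_p`. -/
theorem stmt15 (k p : ℕ) (hk : 2 ≤ k) (hp : 2 ≤ p) :
    (CycCompact (k * p) → CycCompact p) ∧
    ∀ (I : Type) (F : Filter I), F.NeBot →
      ∀ φ : (I → ZMod (k * p)) → ZMod (k * p),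
        (∀ f g : I → ZMod (k * p), {i | g i = f i + 1} ∈ F → φ g = φ f + 1) →
        ∀ f g : I → ZMod p, {i | g i = f i + 1} ∈ F →
          ((((φ (fun i => ((k * (g i).val : ℕ) : ZMod (k * p)))).val / k : ℕ) : ZMod p)) =
          ((((φ (fun i => ((k * (f i).val : ℕ) : ZMod (k * p)))).val / k : ℕ) : ZMod p)) + 1 := by
  exact ⟨cyc_transfer k p hk hp,
    fun I F _ φ hφ f g hfg => psi_hom k p hk hp I F φ hφ f g hfg⟩
end
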